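/- Let f, g: ℝ → ℝ² be injective continuous maps with disjoint images satisfying f(x+1) = f(x) + (0,1) and g(x+1) = g(x) + (0,1) for all x. Then inf{d(f(x), g(y)) : x, y ∈ ℝ} > 0, i.e., the images of f and g are at positive distance from each other. -/

import Mathlib

open Complex

lemma shift_int_aux (f : ℝ → ℂ) (hfper : ∀ x, f (x + 1) = f x + I) :
    ∀ (n : ℤ) (x : ℝ), f (x + n) = f x + n * I := by
  intro n
  induction n using Int.induction_on with
  | zero => intro x; simp
  | succ k ih =>
    intro x
    have ihx := ih x
    push_cast at ihx ⊢
    rw [show x + ((k:ℝ) + 1) = (x + (k:ℝ)) + 1 by ring, hfper, ihx]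
    ring
  | pred k ih =>
    intro x
    have ihx := ih (x - 1)
    have h2 := hfper (x - 1)
    rw [show x - 1 + 1 = x by ring] at h2
    have h3 : f (x - 1) = f x - I := by rw [h2]; ring
    push_cast at ihx ⊢
    rw [show x + (-(k:ℝ) - 1) = (x - 1) + -(k:ℝ) by ring, ihx, h3]
    ring

/-- if `f, g : ℝ → ℝ² ≅ ℂ` are injective continuous maps with disjoint
images, satisfying `f(x+1) = f(x) + (0,1)` and `g(x+1) = g(x) + (0,1)` (i.e. `+ i`
under ℝ² ≅ ℂ), then the images of `f` and `g` are at positive distance: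
`inf { d(f x, g y) } > 0`. -/
theorem periodic_disjoint_curves_positive_distance (f g : ℝ → ℂ)
    (hf : Continuous f) (hg : Continuous g)
    (hfinj : Function.Injective f) (hginj : Function.Injective g)
    (hdisj : Disjoint (Set.range f) (Set.range g))
    (hfper : ∀ x, f (x + 1) = f x + I) (hgper : ∀ x, g (x + 1) = g x + I) :
    ∃ ε > 0, ∀ x y : ℝ, ε ≤ dist (f x) (g y) := by
  have hfs := shift_int_aux f hfper
  have hgs := shift_int_aux g hgper
  have hne : ∀ x y : ℝ, f x ≠ g y := by
    intro x y h
    exact Set.disjoint_left.mp hdisj ⟨x, rfl⟩ ⟨y, h.symm⟩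
  -- bound on imaginary parts over [0,1]
  obtain ⟨Mf, hMf⟩ := isCompact_Icc.exists_bound_of_continuousOn (f := f) hf.continuousOn
  obtain ⟨Mg, hMg⟩ := isCompact_Icc.exists_bound_of_continuousOn (f := g) hg.continuousOn
  set B : ℝ := |Mf| + |Mg| with hB
  have hB0 : 0 ≤ B := by positivity
  have himf : ∀ t ∈ Set.Icc (0:ℝ) 1, |(f t).im| ≤ B := fun t ht => by
    have := (Complex.abs_im_le_norm (f t)).trans (hMf t ht)
    have : |(f t).im| ≤ Mf := this
    calc |(f t).im| ≤ Mf := this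
      _ ≤ |Mf| := le_abs_self _
      _ ≤ B := by rw [hB]; nlinarith [abs_nonneg Mg]
  have himg : ∀ t ∈ Set.Icc (0:ℝ) 1, |(g t).im| ≤ B := fun t ht => by
    have : |(g t).im| ≤ Mg :=
      (Complex.abs_im_le_norm (g t)).trans (hMg t ht)
    calc |(g t).im| ≤ Mg := this
      _ ≤ |Mg| := le_abs_self _
      _ ≤ B := by rw [hB]; nlinarith [abs_nonneg Mf]
  -- the compact set
  set K : Set (ℝ × ℝ) := Set.Icc (0:ℝ) 1 ×ˢ Set.Icc (-(2*B+2)) (2*B+2) with hK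
  have hKc : IsCompact K := isCompact_Icc.prod isCompact_Icc
  have h02 : (0:ℝ) ∈ Set.Icc (-(2*B+2)) (2*B+2) := by
    constructor <;> nlinarith
  have hKne : K.Nonempty := ⟨(0, 0), ⟨le_refl _, zero_le_one⟩, h02⟩
  have hφ : Continuous fun p : ℝ × ℝ => dist (f p.1) (g p.2) :=
    (hf.comp continuous_fst).dist (hg.comp continuous_snd)
  obtain ⟨p, hpK, hpmin⟩ := hKc.exists_isMinOn hKne hφ.continuousOn
  set ε₀ : ℝ := dist (f p.1) (g p.2) with hε₀
  have hε₀pos : 0 < ε₀ := dist_pos.mpr (hne _ _)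
  refine ⟨min ε₀ 1, lt_min hε₀pos one_pos, ?_⟩
  intro x y
  -- shift by ⌊x⌋
  set m : ℤ := ⌊x⌋ with hm
  set x' : ℝ := Int.fract x with hx'
  have hx'mem : x' ∈ Set.Icc (0:ℝ) 1 := ⟨Int.fract_nonneg x, (Int.fract_lt_one x).le⟩
  set y' : ℝ := y - m with hy'
  have key : dist (f x) (g y) = dist (f x') (g y') := by
    have h1 : f x = f x' + m * I := by
      have h := hfs m x'
      rw [show x' + (m:ℝ) = x by rw [hx', hm]; exact Int.fract_add_floor x] at h
      exact h
    have h2 : g y = g y' + m * I := by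
      have h := hgs m y'
      rw [show y' + (m:ℝ) = y by rw [hy']; ring] at h
      exact h
    rw [h1, h2, dist_add_right]
  rw [key]
  by_cases hy : |y'| ≤ 2*B + 2
  · calc min ε₀ 1 ≤ ε₀ := min_le_left _ _
      _ ≤ dist (f x') (g y') := isMinOn_iff.mp hpmin (x', y') (Set.mk_mem_prod hx'mem (abs_le.mp hy))
  · -- far away: distance at least 1
    rw [not_le] at hy
    set n : ℤ := ⌊y'⌋ with hn
    set t : ℝ := Int.fract y' with ht
    have htmem : t ∈ Set.Icc (0:ℝ) 1 := ⟨Int.fract_nonneg y', (Int.fract_lt_one y').le⟩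
    have hgy' : g y' = g t + n * I := by
      have h := hgs n t
      rw [show t + (n:ℝ) = y' by rw [ht, hn]; exact Int.fract_add_floor y'] at h
      exact h
    have habsn : 2*B + 1 < |(n:ℝ)| := by
      have h1 : |y'| - |(n:ℝ)| ≤ |y' - n| := abs_sub_abs_le_abs_sub _ _
      have h2 : |y' - (n:ℝ)| < 1 := by
        rw [hn, Int.self_sub_floor, _root_.abs_of_nonneg (Int.fract_nonneg (R := ℝ) y')]
        exact Int.fract_lt_one y'
      linarith
    have him : |(f x').im - (g y').im| ≤ dist (f x') (g y') := by
      rw [dist_eq, ← Complex.sub_im]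
      exact Complex.abs_im_le_norm _
    have : 1 ≤ dist (f x') (g y') := by
      have h3 : (g y').im = (g t).im + n := by
        rw [hgy']; simp
      have h4 := himf x' hx'mem
      have h5 := himg t htmem
      have h6 : |(n:ℝ)| - |(f x').im| - |(g t).im| ≤ |(f x').im - (g y').im| := by
        rw [h3]
        have := abs_sub ((f x').im - (g t).im) (n:ℝ)
        cases abs_cases ((f x').im - ((g t).im + n)) <;>
          cases abs_cases ((f x').im) <;> cases abs_cases ((g t).im) <;>
          cases abs_cases ((n:ℝ)) <;> linarith
      linarith
    calc min ε₀ 1 ≤ 1 := min_le_right _ _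
      _ ≤ dist (f x') (g y') := this
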